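/- Let H be a σ-MAG, let Z ⊆ V, and let π = (v0, …, vn) be a path of minimal length among all paths between v0 and vn in H that are m-open given Z. If v_j (0 < j < n) is a covered node on π (i.e., v_{j-1} and v_{j+1} are adjacent in H), then: (1) if the edge between v_{j-1} and v_{j+1} is v_{j-1} → v_{j+1}, there exists a unique index i < j such that the subpath of π between v_i and v_{j+1} is a discriminating path for v_j; (2) if the edge is v_{j-1} ← v_{j+1}, there exists a unique index i > j such that the subpath of π between v_{j-1} and v_i is a discriminating path for v_j. -/

import Mathlib

/-- An edge mark: tail or arrowhead. -/
inductive Mark : Type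
  | tail : Mark
  | arrow : Mark
  deriving DecidableEq

/-- A mixed graph, with directed edges (`dir a b` means `a → b`), bidirected edges and
undirected edges. -/
structure MixedGraph (V : Type*) where
  dir : V → V → Prop
  bidir : V → V → Prop
  undir : V → V → Prop
  bidir_symm : ∀ a b, bidir a b → bidir b a
  undir_symm : ∀ a b, undir a b → undir b a

variable {V : Type*}

/-- There is an edge between `x` and `y` carrying mark `m₁` at `x` and mark `m₂` at `y`. -/
def MixedGraph.EdgeMk (G : MixedGraph V) (x y : V) : Mark → Mark → Prop
  | Mark.tail, Mark.arrow => G.dir x y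
  | Mark.arrow, Mark.tail => G.dir y x
  | Mark.arrow, Mark.arrow => G.bidir x y
  | Mark.tail, Mark.tail => G.undir x y

theorem MixedGraph.edgeMk_symm {G : MixedGraph V} {x y : V} {m₁ m₂ : Mark}
    (h : G.EdgeMk x y m₁ m₂) : G.EdgeMk y x m₂ m₁ := by
  cases m₁ <;> cases m₂ <;>
    first
      | exact h
      | exact G.bidir_symm _ _ h
      | exact G.undir_symm _ _ h

/-- `x` and `y` are adjacent: some edge joins them. -/
def MixedGraph.Adj (G : MixedGraph V) (x y : V) : Prop :=
  G.dir x y ∨ G.dir y x ∨ G.bidir x y ∨ G.undir x y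

/-- There is an edge between `a` and `b` with an arrowhead at `a` (i.e. `a ←∗ b`). -/
def MixedGraph.ArrowAt (G : MixedGraph V) (a b : V) : Prop :=
  G.dir b a ∨ G.bidir a b

/-- There is an edge between `a` and `b` with a tail at `a` (i.e. `a —∗ b`). -/
def MixedGraph.TailAt (G : MixedGraph V) (a b : V) : Prop :=
  G.dir a b ∨ G.undir a b

/-- A walk of length `n`: vertices `vert 0, …, vert n`; the `i`-th edge joins `vert i`
and `vert (i+1)`, carrying mark `mk1 i` at `vert i` and mark `mk2 i` at `vert (i+1)`. -/
structure MixedGraph.Walk (G : MixedGraph V) (n : ℕ) where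
  vert : ℕ → V
  mk1 : ℕ → Mark
  mk2 : ℕ → Mark
  valid : ∀ i < n, G.EdgeMk (vert i) (vert (i + 1)) (mk1 i) (mk2 i)

/-- A walk is a path if its vertices are pairwise distinct. -/
def MixedGraph.Walk.IsPath {G : MixedGraph V} {n : ℕ} (w : G.Walk n) : Prop :=
  ∀ i j, i ≤ n → j ≤ n → w.vert i = w.vert j → i = j

/-- Position `k` is a collider on the walk: both incident edges have an arrowhead
at `vert k`. -/
def MixedGraph.Walk.IsCollider {G : MixedGraph V} {n : ℕ} (w : G.Walk n) (k : ℕ) : Prop :=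
  0 < k ∧ k < n ∧ w.mk2 (k - 1) = Mark.arrow ∧ w.mk1 k = Mark.arrow

/-- `a` is an ancestor of `b`: there is a directed walk from `a` to `b`. -/
def MixedGraph.Anc (G : MixedGraph V) (a b : V) : Prop :=
  Relation.ReflTransGen G.dir a b

/-- `a` is an ancestor of some element of `A`. -/
def MixedGraph.AncS (G : MixedGraph V) (a : V) (A : Set V) : Prop :=
  ∃ b ∈ A, G.Anc a b

/-- `b` lies in the strongly connected component of `a`. -/
def MixedGraph.Sc (G : MixedGraph V) (a b : V) : Prop :=
  G.Anc a b ∧ G.Anc b a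

/-- There is an anterior path from `a` to `b`: a path all of whose edges have a tail
mark at the endpoint nearer `a`. -/
def MixedGraph.AnteriorPath (G : MixedGraph V) (a b : V) : Prop :=
  ∃ (n : ℕ) (w : G.Walk n), w.IsPath ∧ w.vert 0 = a ∧ w.vert n = b ∧
    ∀ i < n, w.mk1 i = Mark.tail

/-- The walk is inducing: every non-endpoint node is a collider that is an ancestor
of one of the endpoints. -/
def MixedGraph.Walk.IsInducing {G : MixedGraph V} {n : ℕ} (w : G.Walk n) : Prop :=
  ∀ k, 0 < k → k < n →
    w.IsCollider k ∧ (G.Anc (w.vert k) (w.vert 0) ∨ G.Anc (w.vert k) (w.vert n))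

/-- There is an inducing path between `a` and `b`. -/
def MixedGraph.InducingPath (G : MixedGraph V) (a b : V) : Prop :=
  ∃ (n : ℕ) (w : G.Walk n), w.IsPath ∧ w.vert 0 = a ∧ w.vert n = b ∧ w.IsInducing

/-- There is an inducing walk between `a` and `b`. -/
def MixedGraph.InducingWalk (G : MixedGraph V) (a b : V) : Prop :=
  ∃ (n : ℕ) (w : G.Walk n), w.vert 0 = a ∧ w.vert n = b ∧ w.IsInducing

/-- The neighborhood of `a` (its undirected-edge neighbors) is complete. -/
def MixedGraph.CompleteNbh (G : MixedGraph V) (a : V) : Prop :=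
  ∀ b c, G.undir a b → G.undir a c → b ≠ c → G.undir b c

/-- A σ-maximal ancestral graph (σ-MAG). -/
structure MixedGraph.IsSigmaMAG (G : MixedGraph V) : Prop where
  /-- no self-loops -/
  no_self : ∀ a : V, ¬ G.dir a a ∧ ¬ G.bidir a a ∧ ¬ G.undir a a
  /-- at most one edge between any two nodes -/
  at_most_one : ∀ a b : V,
    (G.dir a b → ¬ G.dir b a ∧ ¬ G.bidir a b ∧ ¬ G.undir a b) ∧
    (G.bidir a b → ¬ G.undir a b)
  /-- ancestral: an anterior path from `a` to `b` excludes an edge into `a` -/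
  ancestral : ∀ a b : V, G.AnteriorPath a b → ¬ G.ArrowAt a b
  /-- maximal: no inducing path between non-adjacent nodes -/
  maximal : ∀ a b : V, a ≠ b → ¬ G.Adj a b → ¬ G.InducingPath a b
  /-- σ-complete, part 1: `a ∗→ b — c` forces `a, c` adjacent -/
  sigma_complete₁ : ∀ a b c : V, G.ArrowAt b a → G.undir b c → G.Adj a c
  /-- σ-complete, part 2: `a ∗→ b — c` and `b — d` force `c, d` adjacent -/
  sigma_complete₂ : ∀ a b c d : V, G.ArrowAt b a → G.undir b c → G.undir b d →
    c ≠ d → G.Adj c d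

/-- The walk is m-open given `Z`. -/
def MixedGraph.Walk.MOpen {G : MixedGraph V} {n : ℕ} (w : G.Walk n) (Z : Set V) : Prop :=
  (∀ k ≤ n, ¬ w.IsCollider k → w.vert k ∉ Z) ∧
  (∀ k, w.IsCollider k → G.AncS (w.vert k) Z) ∧
  (∀ k, 0 < k → k < n →
    ¬ (w.mk2 (k - 1) = Mark.arrow ∧ w.mk1 k = Mark.tail ∧ w.mk2 k = Mark.tail) ∧
    ¬ (w.mk1 (k - 1) = Mark.tail ∧ w.mk2 (k - 1) = Mark.tail ∧ w.mk1 k = Mark.arrow))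

/-- `X` is m-separated from `Y` given `Z`: every walk from `X` to `Y` is m-blocked. -/
def MixedGraph.MSep (G : MixedGraph V) (X Y Z : Set V) : Prop :=
  ∀ (n : ℕ) (w : G.Walk n), w.vert 0 ∈ X → w.vert n ∈ Y → ¬ w.MOpen Z

/-- A directed mixed graph (DMG): no undirected edges and no self-loops. -/
def MixedGraph.IsDMG (G : MixedGraph V) : Prop :=
  (∀ a b : V, ¬ G.undir a b) ∧ ∀ a : V, ¬ G.dir a a ∧ ¬ G.bidir a a

/-- Position `k` is an unblockable non-collider on the walk (in a DMG). -/
def MixedGraph.Walk.Unblockable {G : MixedGraph V} {n : ℕ} (w : G.Walk n) (k : ℕ) : Prop :=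
  0 < k ∧ k < n ∧
  ((w.mk1 (k - 1) = Mark.arrow ∧ w.mk2 (k - 1) = Mark.tail ∧ w.mk1 k = Mark.arrow ∧
      G.Sc (w.vert k) (w.vert (k - 1))) ∨
   (w.mk2 (k - 1) = Mark.arrow ∧ w.mk1 k = Mark.tail ∧ w.mk2 k = Mark.arrow ∧
      G.Sc (w.vert k) (w.vert (k + 1))) ∨
   (w.mk1 (k - 1) = Mark.arrow ∧ w.mk2 (k - 1) = Mark.tail ∧
      w.mk1 k = Mark.tail ∧ w.mk2 k = Mark.arrow ∧
      G.Sc (w.vert k) (w.vert (k - 1)) ∧ G.Sc (w.vert k) (w.vert (k + 1))))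

/-- The walk is σ-open given `W`. -/
def MixedGraph.Walk.SigmaOpen {G : MixedGraph V} {n : ℕ} (w : G.Walk n) (W : Set V) : Prop :=
  (∀ k, w.IsCollider k → G.AncS (w.vert k) W) ∧
  (∀ k ≤ n, ¬ w.IsCollider k → ¬ w.Unblockable k → w.vert k ∉ W)

/-- `X` is σ-separated from `Y` given `W`: every walk from `X` to `Y` is σ-blocked. -/
def MixedGraph.SigmaSep (G : MixedGraph V) (X Y W : Set V) : Prop :=
  ∀ (n : ℕ) (w : G.Walk n), w.vert 0 ∈ X → w.vert n ∈ Y → ¬ w.SigmaOpen W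

/-- The walk is σ-inducing given `S`: each collider is an ancestor of the endpoints or
of `S`, and each non-endpoint non-collider is unblockable. -/
def MixedGraph.Walk.IsSigmaInducing {G : MixedGraph V} {n : ℕ} (w : G.Walk n) (S : Set V) :
    Prop :=
  (∀ k, w.IsCollider k → G.AncS (w.vert k) ({w.vert 0, w.vert n} ∪ S)) ∧
  (∀ k, 0 < k → k < n → ¬ w.IsCollider k → w.Unblockable k)

/-- There is a σ-inducing path given `S` between `a` and `b`. -/
def MixedGraph.SigmaInducingPath (G : MixedGraph V) (S : Set V) (a b : V) : Prop :=
  ∃ (n : ℕ) (w : G.Walk n), w.IsPath ∧ w.vert 0 = a ∧ w.vert n = b ∧ w.IsSigmaInducing S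

/-- The mixed graph `H` (on node set `V`) represents the graph `G` (on node set
`V⁺ = V ∪ S`, where `V` is embedded via `ι` and `S = (Set.range ι)ᶜ` is the set of
selection nodes) given `S`. -/
def Represents {V W : Type*} (H : MixedGraph V) (G : MixedGraph W) (ι : V → W) : Prop :=
  Function.Injective ι ∧
  (∀ a : V, ¬ H.dir a a ∧ ¬ H.bidir a a ∧ ¬ H.undir a a) ∧
  (∀ a b : V,
    (H.dir a b → ¬ H.dir b a ∧ ¬ H.bidir a b ∧ ¬ H.undir a b) ∧
    (H.bidir a b → ¬ H.undir a b)) ∧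
  (∀ a b : V, a ≠ b → (H.Adj a b ↔ G.SigmaInducingPath (Set.range ι)ᶜ (ι a) (ι b))) ∧
  (∀ a b : V, H.ArrowAt a b → ¬ G.AncS (ι a) ({ι b} ∪ (Set.range ι)ᶜ)) ∧
  (∀ a b : V, H.TailAt a b → G.AncS (ι a) ({ι b} ∪ (Set.range ι)ᶜ))

/-- The walk (of length `n ≥ 3`) is a discriminating path for its second-to-last node
`vert (n-1)`: the endpoints are non-adjacent, and every node strictly between `vert 0`
and `vert (n-1)` is a collider and a parent of `vert n`. -/
def MixedGraph.Walk.IsDiscriminating {G : MixedGraph V} {n : ℕ} (w : G.Walk n) : Prop :=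
  3 ≤ n ∧ w.IsPath ∧ ¬ G.Adj (w.vert 0) (w.vert n) ∧
  ∀ k, 0 < k → k < n - 1 → w.IsCollider k ∧ G.dir (w.vert k) (w.vert n)

/-- The subwalk starting at position `i`, of length `m`. -/
def MixedGraph.Walk.shift {G : MixedGraph V} {n : ℕ} (w : G.Walk n) (i m : ℕ)
    (h : i + m ≤ n) : G.Walk m where
  vert k := w.vert (i + k)
  mk1 k := w.mk1 (i + k)
  mk2 k := w.mk2 (i + k)
  valid k hk := by
    have hv := w.valid (i + k) (by omega)
    have he : i + (k + 1) = i + k + 1 := by omega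
    show G.EdgeMk (w.vert (i + k)) (w.vert (i + (k + 1))) (w.mk1 (i + k)) (w.mk2 (i + k))
    rw [he]
    exact hv

/-- The reversed walk. -/
def MixedGraph.Walk.reverse {G : MixedGraph V} {n : ℕ} (w : G.Walk n) : G.Walk n where
  vert k := w.vert (n - k)
  mk1 k := w.mk2 (n - 1 - k)
  mk2 k := w.mk1 (n - 1 - k)
  valid i hi := by
    have hv := w.valid (n - 1 - i) (by omega)
    have h1 : n - 1 - i + 1 = n - i := by omega
    have h2 : n - (i + 1) = n - 1 - i := by omega
    rw [h1] at hv
    show G.EdgeMk (w.vert (n - i)) (w.vert (n - (i + 1))) (w.mk2 (n - 1 - i)) (w.mk1 (n - 1 - i))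
    rw [h2]
    exact MixedGraph.edgeMk_symm hv

/-- `(a, b, c)` is an unshielded collider in `G`. -/
def MixedGraph.UnshieldedCollider (G : MixedGraph V) (a b c : V) : Prop :=
  a ≠ c ∧ ¬ G.Adj a c ∧ G.ArrowAt b a ∧ G.ArrowAt b c

/-- Condition 1 for two σ-MAGs on the same node set: same adjacencies, same unshielded
colliders, and agreement of the collider status of the discriminated node on
corresponding discriminating paths. -/
def Condition1 {V : Type*} (H₁ H₂ : MixedGraph V) : Prop :=
  (∀ a b, H₁.Adj a b ↔ H₂.Adj a b) ∧
  (∀ a b c, H₁.UnshieldedCollider a b c ↔ H₂.UnshieldedCollider a b c) ∧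
  (∀ (n : ℕ) (w₁ : H₁.Walk n) (w₂ : H₂.Walk n),
    (∀ k, w₂.vert k = w₁.vert k) →
    w₁.IsDiscriminating → w₂.IsDiscriminating →
    (w₁.IsCollider (n - 1) ↔ w₂.IsCollider (n - 1)))

/-- `H₁` and `H₂` are m-Markov equivalent. -/
def MMarkovEquiv {V : Type*} (H₁ H₂ : MixedGraph V) : Prop :=
  ∀ X Y Z : Set V, H₁.MSep X Y Z ↔ H₂.MSep X Y Z

section Auxiliary

namespace MixedGraph

variable {V' : Type*} {H : MixedGraph V'}

private lemma mark_cases (m : Mark) : m = Mark.tail ∨ m = Mark.arrow := by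
  cases m <;> simp

/-- A two-edge walk. -/
def walk2 (H : MixedGraph V') (a b c : V') (m1 m2 m3 m4 : Mark)
    (h1 : H.EdgeMk a b m1 m2) (h2 : H.EdgeMk b c m3 m4) : H.Walk 2 where
  vert k := match k with | 0 => a | 1 => b | _ => c
  mk1 k := match k with | 0 => m1 | _ => m3
  mk2 k := match k with | 0 => m2 | _ => m4
  valid i hi := by
    interval_cases i
    · exact h1
    · exact h2

lemma anterior2 (a b c : V') {m2 m4 : Mark} (h1 : H.EdgeMk a b Mark.tail m2)
    (h2 : H.EdgeMk b c Mark.tail m4) (hab : a ≠ b) (hac : a ≠ c) (hbc : b ≠ c) :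
    H.AnteriorPath a c := by
  refine ⟨2, walk2 H a b c _ _ _ _ h1 h2, ?_, rfl, rfl, ?_⟩
  · intro i j hi hj hv
    interval_cases i <;> interval_cases j <;>
      first
        | rfl
        | exact absurd hv hab
        | exact absurd hv hac
        | exact absurd hv hbc
        | exact absurd hv.symm hab
        | exact absurd hv.symm hac
        | exact absurd hv.symm hbc
  · intro i hi
    interval_cases i <;> rfl

lemma dir_edgeMk {x y : V'} (h : H.dir x y) : H.EdgeMk x y Mark.tail Mark.arrow := h

lemma undir_edgeMk {x y : V'} (h : H.undir x y) : H.EdgeMk x y Mark.tail Mark.tail := h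

lemma arrowAt_snd {x y : V'} {m : Mark} (h : H.EdgeMk x y m Mark.arrow) : H.ArrowAt y x := by
  cases m
  · exact Or.inl h
  · exact Or.inr (H.bidir_symm x y h)

/-- The walk obtained by splicing out the part of `w` strictly between positions `p` and `q`,
using an edge between `w.vert p` and `w.vert q`. -/
def Walk.splice {n : ℕ} (w : H.Walk n) (p q : ℕ) (hpq : p < q) (hqn : q ≤ n)
    (m1 m2 : Mark) (he : H.EdgeMk (w.vert p) (w.vert q) m1 m2) :
    H.Walk (p + (n - q) + 1) where
  vert k := if k ≤ p then w.vert k else w.vert (k + (q - p - 1))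
  mk1 k := if k < p then w.mk1 k else if k = p then m1 else w.mk1 (k + (q - p - 1))
  mk2 k := if k < p then w.mk2 k else if k = p then m2 else w.mk2 (k + (q - p - 1))
  valid k hk := by
    beta_reduce
    rcases Nat.lt_trichotomy k p with h | h | h
    · have e1 : (if k ≤ p then w.vert k else w.vert (k + (q - p - 1))) = w.vert k :=
        if_pos (by omega)
      have e2 : (if k + 1 ≤ p then w.vert (k + 1) else w.vert (k + 1 + (q - p - 1)))
          = w.vert (k + 1) := if_pos (by omega)
      have e3 : (if k < p then w.mk1 k else if k = p then m1 else w.mk1 (k + (q - p - 1)))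
          = w.mk1 k := if_pos h
      have e4 : (if k < p then w.mk2 k else if k = p then m2 else w.mk2 (k + (q - p - 1)))
          = w.mk2 k := if_pos h
      rw [e1, e2, e3, e4]
      exact w.valid k (by omega)
    · subst h
      have e1 : (if k ≤ k then w.vert k else w.vert (k + (q - k - 1))) = w.vert k :=
        if_pos le_rfl
      have e2 : (if k + 1 ≤ k then w.vert (k + 1) else w.vert (k + 1 + (q - k - 1)))
          = w.vert q := by
        rw [if_neg (by omega)]; exact congrArg w.vert (by omega)
      have e3 : (if k < k then w.mk1 k else if k = k then m1 else w.mk1 (k + (q - k - 1)))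
          = m1 := by rw [if_neg (lt_irrefl k), if_pos rfl]
      have e4 : (if k < k then w.mk2 k else if k = k then m2 else w.mk2 (k + (q - k - 1)))
          = m2 := by rw [if_neg (lt_irrefl k), if_pos rfl]
      rw [e1, e2, e3, e4]
      exact he
    · have e1 : (if k ≤ p then w.vert k else w.vert (k + (q - p - 1)))
          = w.vert (k + (q - p - 1)) := if_neg (by omega)
      have e2 : (if k + 1 ≤ p then w.vert (k + 1) else w.vert (k + 1 + (q - p - 1)))
          = w.vert (k + (q - p - 1) + 1) := by
        rw [if_neg (by omega)]; exact congrArg w.vert (by omega)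
      have e3 : (if k < p then w.mk1 k else if k = p then m1 else w.mk1 (k + (q - p - 1)))
          = w.mk1 (k + (q - p - 1)) := by rw [if_neg (by omega), if_neg (by omega)]
      have e4 : (if k < p then w.mk2 k else if k = p then m2 else w.mk2 (k + (q - p - 1)))
          = w.mk2 (k + (q - p - 1)) := by rw [if_neg (by omega), if_neg (by omega)]
      rw [e1, e2, e3, e4]
      exact w.valid (k + (q - p - 1)) (by omega)

section SpliceLemmas

variable {n : ℕ} {w : H.Walk n} {p q : ℕ} {hpq : p < q} {hqn : q ≤ n}
  {m1 m2 : Mark} {he : H.EdgeMk (w.vert p) (w.vert q) m1 m2}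

lemma splice_vert_le {k : ℕ} (hk : k ≤ p) :
    (w.splice p q hpq hqn m1 m2 he).vert k = w.vert k := if_pos hk

lemma splice_vert_gt {k : ℕ} (hk : p < k) :
    (w.splice p q hpq hqn m1 m2 he).vert k = w.vert (k + (q - p - 1)) := if_neg (by omega)

lemma splice_mk1_lt {k : ℕ} (hk : k < p) :
    (w.splice p q hpq hqn m1 m2 he).mk1 k = w.mk1 k := if_pos hk

lemma splice_mk1_eq :
    (w.splice p q hpq hqn m1 m2 he).mk1 p = m1 := by
  show (if p < p then w.mk1 p else if p = p then m1 else w.mk1 (p + (q - p - 1))) = m1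
  rw [if_neg (lt_irrefl p), if_pos rfl]

lemma splice_mk1_gt {k : ℕ} (hk : p < k) :
    (w.splice p q hpq hqn m1 m2 he).mk1 k = w.mk1 (k + (q - p - 1)) := by
  show (if k < p then w.mk1 k else if k = p then m1 else w.mk1 (k + (q - p - 1)))
      = w.mk1 (k + (q - p - 1))
  rw [if_neg (by omega), if_neg (by omega)]

lemma splice_mk2_lt {k : ℕ} (hk : k < p) :
    (w.splice p q hpq hqn m1 m2 he).mk2 k = w.mk2 k := if_pos hk

lemma splice_mk2_eq :
    (w.splice p q hpq hqn m1 m2 he).mk2 p = m2 := by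
  show (if p < p then w.mk2 p else if p = p then m2 else w.mk2 (p + (q - p - 1))) = m2
  rw [if_neg (lt_irrefl p), if_pos rfl]

lemma splice_mk2_gt {k : ℕ} (hk : p < k) :
    (w.splice p q hpq hqn m1 m2 he).mk2 k = w.mk2 (k + (q - p - 1)) := by
  show (if k < p then w.mk2 k else if k = p then m2 else w.mk2 (k + (q - p - 1)))
      = w.mk2 (k + (q - p - 1))
  rw [if_neg (by omega), if_neg (by omega)]

lemma splice_isPath (hpq' : p < q) (hqn' : q ≤ n) (he' : H.EdgeMk (w.vert p) (w.vert q) m1 m2)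
    (hw : w.IsPath) : (w.splice p q hpq' hqn' m1 m2 he').IsPath := by
  intro a b ha hb hv
  by_cases h1 : a ≤ p <;> by_cases h2 : b ≤ p
  · rw [splice_vert_le h1, splice_vert_le h2] at hv
    exact hw a b (by omega) (by omega) hv
  · rw [splice_vert_le h1, splice_vert_gt (by omega : p < b)] at hv
    have := hw a (b + (q - p - 1)) (by omega) (by omega) hv
    omega
  · rw [splice_vert_gt (by omega : p < a), splice_vert_le h2] at hv
    have := hw (a + (q - p - 1)) b (by omega) (by omega) hv
    omega
  · rw [splice_vert_gt (by omega : p < a), splice_vert_gt (by omega : p < b)] at hv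
    have := hw (a + (q - p - 1)) (b + (q - p - 1)) (by omega) (by omega) hv
    omega

lemma splice_collider_lt {k : ℕ} (hk : k < p) :
    (w.splice p q hpq hqn m1 m2 he).IsCollider k ↔ w.IsCollider k := by
  constructor
  · rintro ⟨a, b, c, d⟩
    rw [splice_mk2_lt (by omega : k - 1 < p)] at c
    rw [splice_mk1_lt hk] at d
    exact ⟨a, by omega, c, d⟩
  · rintro ⟨a, b, c, d⟩
    refine ⟨a, by omega, ?_, ?_⟩
    · rw [splice_mk2_lt (by omega : k - 1 < p)]; exact c
    · rw [splice_mk1_lt hk]; exact d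

lemma splice_collider_p :
    (w.splice p q hpq hqn m1 m2 he).IsCollider p ↔
      (0 < p ∧ w.mk2 (p - 1) = Mark.arrow ∧ m1 = Mark.arrow) := by
  constructor
  · rintro ⟨a, b, c, d⟩
    rw [splice_mk2_lt (by omega : p - 1 < p)] at c
    rw [splice_mk1_eq] at d
    exact ⟨a, c, d⟩
  · rintro ⟨a, c, d⟩
    refine ⟨a, by omega, ?_, ?_⟩
    · rw [splice_mk2_lt (by omega : p - 1 < p)]; exact c
    · rw [splice_mk1_eq]; exact d

lemma splice_collider_q :
    (w.splice p q hpq hqn m1 m2 he).IsCollider (p + 1) ↔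
      (q < n ∧ m2 = Mark.arrow ∧ w.mk1 q = Mark.arrow) := by
  have e1 : p + 1 + (q - p - 1) = q := by omega
  constructor
  · rintro ⟨a, b, c, d⟩
    rw [Nat.add_sub_cancel, splice_mk2_eq] at c
    rw [splice_mk1_gt (by omega : p < p + 1), e1] at d
    exact ⟨by omega, c, d⟩
  · rintro ⟨a, c, d⟩
    refine ⟨by omega, by omega, ?_, ?_⟩
    · rw [Nat.add_sub_cancel, splice_mk2_eq]; exact c
    · rw [splice_mk1_gt (by omega : p < p + 1), e1]; exact d

lemma splice_collider_gt {k : ℕ} (hk : p + 1 < k) :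
    (w.splice p q hpq hqn m1 m2 he).IsCollider k ↔ w.IsCollider (k + (q - p - 1)) := by
  have e1 : (k - 1) + (q - p - 1) = k + (q - p - 1) - 1 := by omega
  constructor
  · rintro ⟨a, b, c, d⟩
    rw [splice_mk2_gt (by omega : p < k - 1), e1] at c
    rw [splice_mk1_gt (by omega : p < k)] at d
    exact ⟨by omega, by omega, c, d⟩
  · rintro ⟨a, b, c, d⟩
    refine ⟨by omega, by omega, ?_, ?_⟩
    · rw [splice_mk2_gt (by omega : p < k - 1), e1]; exact c
    · rw [splice_mk1_gt (by omega : p < k)]; exact d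

lemma splice_mopen {Z : Set V'} (hpq' : p < q) (hqn' : q ≤ n)
    (he' : H.EdgeMk (w.vert p) (w.vert q) m1 m2)
    (hopen : w.MOpen Z)
    (hp1 : 0 < p → w.mk2 (p - 1) = Mark.arrow → m1 = Mark.arrow → H.AncS (w.vert p) Z)
    (hp2 : ¬(0 < p ∧ w.mk2 (p - 1) = Mark.arrow ∧ m1 = Mark.arrow) → w.vert p ∉ Z)
    (hq1 : q < n → m2 = Mark.arrow → w.mk1 q = Mark.arrow → H.AncS (w.vert q) Z)
    (hq2 : ¬(q < n ∧ m2 = Mark.arrow ∧ w.mk1 q = Mark.arrow) → w.vert q ∉ Z)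
    (hfp1 : 0 < p → ¬(w.mk2 (p - 1) = Mark.arrow ∧ m1 = Mark.tail ∧ m2 = Mark.tail))
    (hfp2 : 0 < p → ¬(w.mk1 (p - 1) = Mark.tail ∧ w.mk2 (p - 1) = Mark.tail ∧ m1 = Mark.arrow))
    (hfq1 : q < n → ¬(m2 = Mark.arrow ∧ w.mk1 q = Mark.tail ∧ w.mk2 q = Mark.tail))
    (hfq2 : q < n → ¬(m1 = Mark.tail ∧ m2 = Mark.tail ∧ w.mk1 q = Mark.arrow)) :
    (w.splice p q hpq' hqn' m1 m2 he').MOpen Z := by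
  refine ⟨?_, ?_, ?_⟩
  · intro k hk hnc
    by_cases h1 : k < p
    · rw [splice_vert_le (by omega : k ≤ p)]
      exact hopen.1 k (by omega) (fun hc => hnc ((splice_collider_lt h1).mpr hc))
    by_cases h2 : k = p
    · subst h2
      rw [splice_vert_le (le_refl k)]
      exact hp2 (fun hc => hnc (splice_collider_p.mpr hc))
    by_cases h3 : k = p + 1
    · subst h3
      rw [splice_vert_gt (by omega : p < p + 1), show p + 1 + (q - p - 1) = q from by omega]
      exact hq2 (fun hc => hnc (splice_collider_q.mpr hc))
    · have h4 : p + 1 < k := by omega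
      rw [splice_vert_gt (by omega : p < k)]
      exact hopen.1 (k + (q - p - 1)) (by omega)
        (fun hc => hnc ((splice_collider_gt h4).mpr hc))
  · intro k hc
    have hkL : k < p + (n - q) + 1 := hc.2.1
    by_cases h1 : k < p
    · rw [splice_vert_le (by omega : k ≤ p)]
      exact hopen.2.1 k ((splice_collider_lt h1).mp hc)
    by_cases h2 : k = p
    · subst h2
      rw [splice_vert_le (le_refl k)]
      obtain ⟨a, c, d⟩ := splice_collider_p.mp hc
      exact hp1 a c d
    by_cases h3 : k = p + 1
    · subst h3
      rw [splice_vert_gt (by omega : p < p + 1), show p + 1 + (q - p - 1) = q from by omega]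
      obtain ⟨a, c, d⟩ := splice_collider_q.mp hc
      exact hq1 a c d
    · have h4 : p + 1 < k := by omega
      rw [splice_vert_gt (by omega : p < k)]
      exact hopen.2.1 (k + (q - p - 1)) ((splice_collider_gt h4).mp hc)
  · intro k hk0 hkL
    by_cases h1 : k < p
    · have h := hopen.2.2 k hk0 (by omega)
      constructor
      · rw [splice_mk2_lt (by omega : k - 1 < p), splice_mk1_lt h1, splice_mk2_lt h1]
        exact h.1
      · rw [splice_mk1_lt (by omega : k - 1 < p), splice_mk2_lt (by omega : k - 1 < p),
          splice_mk1_lt h1]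
        exact h.2
    by_cases h2 : k = p
    · subst h2
      constructor
      · rw [splice_mk2_lt (by omega : k - 1 < k), splice_mk1_eq, splice_mk2_eq]
        exact hfp1 hk0
      · rw [splice_mk1_lt (by omega : k - 1 < k), splice_mk2_lt (by omega : k - 1 < k),
          splice_mk1_eq]
        exact hfp2 hk0
    by_cases h3 : k = p + 1
    · subst h3
      have hqn'' : q < n := by omega
      have e1 : p + 1 + (q - p - 1) = q := by omega
      constructor
      · rw [Nat.add_sub_cancel, splice_mk2_eq, splice_mk1_gt (by omega : p < p + 1), e1,
          splice_mk2_gt (by omega : p < p + 1), e1]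
        exact hfq1 hqn''
      · rw [Nat.add_sub_cancel, splice_mk1_eq, splice_mk2_eq,
          splice_mk1_gt (by omega : p < p + 1), e1]
        exact hfq2 hqn''
    · have h4 : p + 1 < k := by omega
      have h := hopen.2.2 (k + (q - p - 1)) (by omega) (by omega)
      have e2 : (k - 1) + (q - p - 1) = k + (q - p - 1) - 1 := by omega
      constructor
      · rw [splice_mk2_gt (by omega : p < k - 1), e2, splice_mk1_gt (by omega : p < k),
          splice_mk2_gt (by omega : p < k)]
        exact h.1
      · rw [splice_mk1_gt (by omega : p < k - 1), splice_mk2_gt (by omega : p < k - 1), e2,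
          splice_mk1_gt (by omega : p < k)]
        exact h.2

end SpliceLemmas

end MixedGraph

end Auxiliary

section Auxiliary2

namespace MixedGraph

variable {V' : Type*} {H : MixedGraph V'}

/-- Sublemma: in the covered-node configuration `v_{j-1} → v_{j+1}`, if the edge between
`v_j` and `v_{j+1}` has a tail at `v_{j+1}`, then it is `v_{j+1} → v_j` and `v_{j+1}` is
an ancestor of `Z`. -/
lemma subA (hH : H.IsSigmaMAG) {Z : Set V'} {n : ℕ} {w : H.Walk n}
    (hpath : w.IsPath) (hopen : w.MOpen Z) {j : ℕ} (hj0 : 0 < j) (hjn : j < n)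
    (hdir : H.dir (w.vert (j - 1)) (w.vert (j + 1)))
    (ht : w.mk2 j = Mark.tail) :
    H.dir (w.vert (j + 1)) (w.vert j) ∧ H.AncS (w.vert (j + 1)) Z := by
  have hne : ∀ a b, a ≤ n → b ≤ n → a ≠ b → w.vert a ≠ w.vert b :=
    fun a b ha hb hab hv => hab (hpath a b ha hb hv)
  have hvj := w.valid j hjn
  rw [ht] at hvj
  have hvj1 := w.valid (j - 1) (by omega)
  rw [show j - 1 + 1 = j from by omega] at hvj1
  cases hm : w.mk1 j with
  | tail =>
    exfalso
    rw [hm] at hvj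
    have hp1 := (hopen.2.2 j hj0 hjn).1
    have hmm : w.mk2 (j - 1) = Mark.tail := by
      cases hmm : w.mk2 (j - 1) with
      | tail => rfl
      | arrow => exact absurd ⟨hmm, hm, ht⟩ hp1
    rw [hmm] at hvj1
    have hant : H.AnteriorPath (w.vert (j + 1)) (w.vert (j - 1)) :=
      anterior2 _ (w.vert j) _ (edgeMk_symm hvj) (edgeMk_symm hvj1)
        (hne (j + 1) j (by omega) (by omega) (by omega))
        (hne (j + 1) (j - 1) (by omega) (by omega) (by omega))
        (hne j (j - 1) (by omega) (by omega) (by omega))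
    exact hH.ancestral _ _ hant (Or.inl hdir)
  | arrow =>
    rw [hm] at hvj
    have hdjj : H.dir (w.vert (j + 1)) (w.vert j) := hvj
    refine ⟨hdjj, ?_⟩
    cases hmm : w.mk2 (j - 1) with
    | tail =>
      exfalso
      rw [hmm] at hvj1
      have hp2 := (hopen.2.2 j hj0 hjn).2
      have hmk1 : w.mk1 (j - 1) = Mark.arrow := by
        cases h' : w.mk1 (j - 1) with
        | tail => exact absurd ⟨h', hmm, hm⟩ hp2
        | arrow => rfl
      rw [hmk1] at hvj1
      have hant : H.AnteriorPath (w.vert j) (w.vert (j + 1)) :=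
        anterior2 _ (w.vert (j - 1)) _ (edgeMk_symm hvj1) (dir_edgeMk hdir)
          (hne j (j - 1) (by omega) (by omega) (by omega))
          (hne j (j + 1) (by omega) (by omega) (by omega))
          (hne (j - 1) (j + 1) (by omega) (by omega) (by omega))
      exact hH.ancestral _ _ hant (Or.inl hdjj)
    | arrow =>
      obtain ⟨b, hb, hanc⟩ := hopen.2.1 j ⟨hj0, hjn, hmm, hm⟩
      exact ⟨b, hb, Relation.ReflTransGen.head hdjj hanc⟩

/-- Master lemma: impossibility of certain chords on a shortest m-open path. -/
theorem lemM (hH : H.IsSigmaMAG) {Z : Set V'} {n : ℕ} {w : H.Walk n}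
    (hpath : w.IsPath) (hopen : w.MOpen Z)
    (hmin : ∀ (m : ℕ) (w' : H.Walk m), w'.IsPath → w'.vert 0 = w.vert 0 →
      w'.vert m = w.vert n → w'.MOpen Z → n ≤ m)
    (m1 : Mark) (p q : ℕ) (hpq : p + 2 ≤ q) (hqn : q ≤ n)
    (he : H.EdgeMk (w.vert p) (w.vert q) m1 Mark.arrow)
    (hp1 : 0 < p → w.mk2 (p - 1) = Mark.arrow → m1 = Mark.arrow → H.AncS (w.vert p) Z)
    (hp2 : ¬(0 < p ∧ w.mk2 (p - 1) = Mark.arrow ∧ m1 = Mark.arrow) → w.vert p ∉ Z)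
    (hfp2 : 0 < p → ¬(w.mk1 (p - 1) = Mark.tail ∧ w.mk2 (p - 1) = Mark.tail ∧ m1 = Mark.arrow))
    (hAq : q < n → w.mk1 q = Mark.arrow → H.AncS (w.vert q) Z) : False := by
  have hne : ∀ a b, a ≤ n → b ≤ n → a ≠ b → w.vert a ≠ w.vert b :=
    fun a b ha hb hab hv => hab (hpath a b ha hb hv)
  by_cases hcase : q < n ∧ w.mk1 q = Mark.tail ∧ w.mk2 q = Mark.tail
  · obtain ⟨hqn', ht1, ht2⟩ := hcase
    have hu : H.undir (w.vert q) (w.vert (q + 1)) := by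
      have hval := w.valid q hqn'
      rw [ht1, ht2] at hval
      exact hval
    have harr : H.ArrowAt (w.vert q) (w.vert p) := arrowAt_snd he
    have hadj := hH.sigma_complete₁ (w.vert p) (w.vert q) (w.vert (q + 1)) harr hu
    have hd1 : w.vert p ≠ w.vert q := hne p q (by omega) (by omega) (by omega)
    have hd2 : w.vert p ≠ w.vert (q + 1) := hne p (q + 1) (by omega) (by omega) (by omega)
    have hd3 : w.vert q ≠ w.vert (q + 1) := hne q (q + 1) (by omega) (by omega) (by omega)
    have he' : H.EdgeMk (w.vert p) (w.vert (q + 1)) m1 Mark.arrow := by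
      rcases hadj with h | h | h | h
      · cases m1 with
        | tail => exact h
        | arrow =>
          exfalso
          have hant : H.AnteriorPath (w.vert p) (w.vert q) :=
            anterior2 _ (w.vert (q + 1)) _ (dir_edgeMk h) (edgeMk_symm (undir_edgeMk hu)) hd2 hd1 hd3.symm
          exact hH.ancestral _ _ hant (Or.inr he)
      · exfalso
        have hant : H.AnteriorPath (w.vert q) (w.vert p) :=
          anterior2 _ (w.vert (q + 1)) _ (undir_edgeMk hu) (dir_edgeMk h) hd3 hd1.symm hd2.symm
        exact hH.ancestral _ _ hant harr
      · cases m1 with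
        | arrow => exact h
        | tail =>
          exfalso
          have hant : H.AnteriorPath (w.vert p) (w.vert (q + 1)) :=
            anterior2 _ (w.vert q) _ he (undir_edgeMk hu) hd1 hd2 hd3
          exact hH.ancestral _ _ hant (Or.inr h)
      · exfalso
        have hant : H.AnteriorPath (w.vert q) (w.vert p) :=
          anterior2 _ (w.vert (q + 1)) _ (undir_edgeMk hu) (undir_edgeMk (H.undir_symm _ _ h)) hd3 hd1.symm hd2.symm
        exact hH.ancestral _ _ hant harr
    have hAq' : q + 1 < n → w.mk1 (q + 1) = Mark.arrow → H.AncS (w.vert (q + 1)) Z := by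
      intro h1 h2
      exact absurd ⟨ht1, ht2, h2⟩ ((hopen.2.2 (q + 1) (by omega) h1).2)
    exact lemM hH hpath hopen hmin m1 p (q + 1) (by omega) (by omega) he' hp1 hp2 hfp2 hAq'
  · have hpq' : p < q := by omega
    have hspl := splice_mopen hpq' hqn he hopen hp1 hp2
      (fun h _ h2 => hAq h h2)
      (fun hn => hopen.1 q hqn (fun hc => hn ⟨hc.2.1, rfl, hc.2.2.2⟩))
      (fun _ hx => Mark.noConfusion hx.2.2)
      hfp2
      (fun h hx => hcase ⟨h, hx.2.1, hx.2.2⟩)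
      (fun _ hx => Mark.noConfusion hx.2.1)
    have h0 : (w.splice p q hpq' hqn m1 Mark.arrow he).vert 0 = w.vert 0 :=
      splice_vert_le (Nat.zero_le p)
    have hL : (w.splice p q hpq' hqn m1 Mark.arrow he).vert (p + (n - q) + 1) = w.vert n := by
      rw [splice_vert_gt (by omega : p < p + (n - q) + 1)]
      exact congrArg w.vert (by omega)
    have := hmin _ _ (splice_isPath hpq' hqn he hpath) h0 hL hspl
    omega
termination_by n - q
decreasing_by omega

/-- Downward induction establishing the discriminating-path structure. -/
theorem lemD (hH : H.IsSigmaMAG) {Z : Set V'} {n : ℕ} {w : H.Walk n}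
    (hpath : w.IsPath) (hopen : w.MOpen Z)
    (hmin : ∀ (m : ℕ) (w' : H.Walk m), w'.IsPath → w'.vert 0 = w.vert 0 →
      w'.vert m = w.vert n → w'.MOpen Z → n ≤ m)
    {j : ℕ} (hj0 : 0 < j) (hjn : j < n)
    (hdir : H.dir (w.vert (j - 1)) (w.vert (j + 1)))
    (i : ℕ) (hij : i < j)
    (hInv : ∀ l, i < l → l < j → w.IsCollider l ∧ H.dir (w.vert l) (w.vert (j + 1))) :
    ∃ i', i' ≤ i ∧ ¬ H.Adj (w.vert i') (w.vert (j + 1)) ∧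
      ∀ l, i' < l → l < j → w.IsCollider l ∧ H.dir (w.vert l) (w.vert (j + 1)) := by
  have hne : ∀ a b, a ≤ n → b ≤ n → a ≠ b → w.vert a ≠ w.vert b :=
    fun a b ha hb hab hv => hab (hpath a b ha hb hv)
  by_cases hadj : H.Adj (w.vert i) (w.vert (j + 1))
  · have hAq : j + 1 < n → w.mk1 (j + 1) = Mark.arrow → H.AncS (w.vert (j + 1)) Z := by
      intro h1 h2
      cases hm : w.mk2 j with
      | arrow =>
        exact hopen.2.1 (j + 1) ⟨by omega, h1, by rw [Nat.add_sub_cancel]; exact hm, h2⟩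
      | tail => exact (subA hH hpath hopen hj0 hjn hdir hm).2
    rcases hadj with h | h | h | h
    · -- h : dir v_i v_{j+1}
      have key : 0 < i ∧ w.IsCollider i := by
        by_contra hnc
        refine lemM hH hpath hopen hmin Mark.tail i (j + 1) (by omega) (by omega) h ?_ ?_ ?_ hAq
        · intro _ _ habs; exact Mark.noConfusion habs
        · intro _; exact hopen.1 i (by omega) (fun hc => hnc ⟨hc.1, hc⟩)
        · intro _ hx; exact Mark.noConfusion hx.2.2
      obtain ⟨hi0, hic⟩ := key
      obtain ⟨i', hle, hrest⟩ := lemD hH hpath hopen hmin hj0 hjn hdir (i - 1) (by omega)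
        (by
          intro l hl1 hl2
          rcases Nat.lt_or_ge l (i + 1) with hl | hl
          · have hli : l = i := by omega
            subst hli
            exact ⟨hic, h⟩
          · exact hInv l (by omega) hl2)
      exact ⟨i', by omega, hrest⟩
    · -- h : dir v_{j+1} v_i
      exfalso
      by_cases hij1 : i = j - 1
      · rw [hij1] at h
        exact ((hH.at_most_one _ _).1 hdir).1 h
      · obtain ⟨hcol, hd1⟩ := hInv (i + 1) (by omega) (by omega)
        have hmk2i : w.mk2 i = Mark.arrow := by
          have := hcol.2.2.1; rwa [Nat.add_sub_cancel] at this
        have hvv := w.valid i (by omega)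
        rw [hmk2i] at hvv
        have harr : H.ArrowAt (w.vert (i + 1)) (w.vert i) := arrowAt_snd hvv
        have hant : H.AnteriorPath (w.vert (i + 1)) (w.vert i) :=
          anterior2 _ (w.vert (j + 1)) _ (dir_edgeMk hd1) (dir_edgeMk h)
            (hne (i + 1) (j + 1) (by omega) (by omega) (by omega))
            (hne (i + 1) i (by omega) (by omega) (by omega))
            (hne (j + 1) i (by omega) (by omega) (by omega))
        exact hH.ancestral _ _ hant harr
    · -- h : bidir v_i v_{j+1}
      exfalso
      by_cases hij1 : i = j - 1
      · rw [hij1] at h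
        exact ((hH.at_most_one _ _).1 hdir).2.1 h
      · cases hmi : w.mk1 i with
        | tail =>
          obtain ⟨hcol, hd1⟩ := hInv (i + 1) (by omega) (by omega)
          have hmk2i : w.mk2 i = Mark.arrow := by
            have := hcol.2.2.1; rwa [Nat.add_sub_cancel] at this
          have hvv := w.valid i (by omega)
          rw [hmi, hmk2i] at hvv
          have hant : H.AnteriorPath (w.vert i) (w.vert (j + 1)) :=
            anterior2 _ (w.vert (i + 1)) _ hvv (dir_edgeMk hd1)
              (hne i (i + 1) (by omega) (by omega) (by omega))
              (hne i (j + 1) (by omega) (by omega) (by omega))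
              (hne (i + 1) (j + 1) (by omega) (by omega) (by omega))
          exact hH.ancestral _ _ hant (Or.inr h)
        | arrow =>
          refine lemM hH hpath hopen hmin Mark.arrow i (j + 1) (by omega) (by omega) h
            ?_ ?_ ?_ hAq
          · intro hi0 hm2 _; exact hopen.2.1 i ⟨hi0, by omega, hm2, hmi⟩
          · intro hn; exact hopen.1 i (by omega) (fun hc => hn ⟨hc.1, hc.2.2.1, rfl⟩)
          · intro hi0 hx; exact (hopen.2.2 i hi0 (by omega)).2 ⟨hx.1, hx.2.1, hmi⟩
    · -- h : undir v_i v_{j+1}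
      exfalso
      by_cases hij1 : i = j - 1
      · rw [hij1] at h
        exact ((hH.at_most_one _ _).1 hdir).2.2 h
      · obtain ⟨hcol, hd1⟩ := hInv (i + 1) (by omega) (by omega)
        have hmk2i : w.mk2 i = Mark.arrow := by
          have := hcol.2.2.1; rwa [Nat.add_sub_cancel] at this
        have hvv := w.valid i (by omega)
        rw [hmk2i] at hvv
        have harr : H.ArrowAt (w.vert (i + 1)) (w.vert i) := arrowAt_snd hvv
        have hant : H.AnteriorPath (w.vert (i + 1)) (w.vert i) :=
          anterior2 _ (w.vert (j + 1)) _ (dir_edgeMk hd1) (undir_edgeMk (H.undir_symm _ _ h))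
            (hne (i + 1) (j + 1) (by omega) (by omega) (by omega))
            (hne (i + 1) i (by omega) (by omega) (by omega))
            (hne (j + 1) i (by omega) (by omega) (by omega))
        exact hH.ancestral _ _ hant harr
  · exact ⟨i, le_rfl, hadj, hInv⟩
termination_by i
decreasing_by omega

end MixedGraph

end Auxiliary2

section Auxiliary3

namespace MixedGraph

variable {V' : Type*} {H : MixedGraph V'}

/-- Existence and uniqueness of the discriminating subpath on the left of a covered node. -/
theorem main_part1 (hH : H.IsSigmaMAG) {Z : Set V'} {n : ℕ} (w : H.Walk n)
    (hpath : w.IsPath) (hopen : w.MOpen Z)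
    (hmin : ∀ (m : ℕ) (w' : H.Walk m), w'.IsPath → w'.vert 0 = w.vert 0 →
      w'.vert m = w.vert n → w'.MOpen Z → n ≤ m)
    (j : ℕ) (hj0 : 0 < j) (hjn : j < n)
    (hdir : H.dir (w.vert (j - 1)) (w.vert (j + 1))) :
    ∃! i, ∃ _ : i < j, (w.shift i (j + 1 - i) (by rw [Nat.add_sub_of_le (by omega)]; omega)).IsDiscriminating := by
  obtain ⟨i₀, hi₀le, hnadj, hInv⟩ := lemD hH hpath hopen hmin hj0 hjn hdir (j - 1) (by omega)
    (fun l h1 h2 => (by omega : False).elim)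
  have hi₀2 : i₀ + 2 ≤ j := by
    by_contra hcon
    have hli : i₀ = j - 1 := by omega
    rw [hli] at hnadj
    exact hnadj (Or.inl hdir)
  have e2 : i₀ + (j + 1 - i₀) = j + 1 := by omega
  refine ⟨i₀, ⟨by omega, ?_⟩, ?_⟩
  · refine ⟨by omega, ?_, ?_, ?_⟩
    · intro a b ha hb hv
      have := hpath (i₀ + a) (i₀ + b) (by omega) (by omega) hv
      omega
    · show ¬ H.Adj (w.vert (i₀ + 0)) (w.vert (i₀ + (j + 1 - i₀)))
      rw [Nat.add_zero, e2]
      exact hnadj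
    · intro k hk0 hk1
      obtain ⟨hcl, hdl⟩ := hInv (i₀ + k) (by omega) (by omega)
      refine ⟨⟨hk0, by omega, ?_, ?_⟩, ?_⟩
      · show w.mk2 (i₀ + (k - 1)) = Mark.arrow
        rw [show i₀ + (k - 1) = i₀ + k - 1 from by omega]
        exact hcl.2.2.1
      · exact hcl.2.2.2
      · show H.dir (w.vert (i₀ + k)) (w.vert (i₀ + (j + 1 - i₀)))
        rw [e2]
        exact hdl
  · rintro y ⟨hyj, hdisc⟩
    rcases Nat.lt_trichotomy y i₀ with h | h | h
    · exfalso
      have hk := hdisc.2.2.2 (i₀ - y) (by omega) (by omega)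
      have hd : H.dir (w.vert (y + (i₀ - y))) (w.vert (y + (j + 1 - y))) := hk.2
      rw [show y + (i₀ - y) = i₀ from by omega, show y + (j + 1 - y) = j + 1 from by omega] at hd
      exact hnadj (Or.inl hd)
    · exact h
    · exfalso
      have hd := (hInv y h hyj).2
      have hna : ¬ H.Adj (w.vert (y + 0)) (w.vert (y + (j + 1 - y))) := hdisc.2.2.1
      rw [Nat.add_zero, show y + (j + 1 - y) = j + 1 from by omega] at hna
      exact hna (Or.inl hd)

lemma reverse_isPath {n : ℕ} {w : H.Walk n} (hw : w.IsPath) : w.reverse.IsPath := by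
  intro a b ha hb hv
  have := hw (n - a) (n - b) (by omega) (by omega) hv
  omega

lemma reverse_isCollider_iff {n : ℕ} (w : H.Walk n) (k : ℕ) :
    w.reverse.IsCollider k ↔ w.IsCollider (n - k) := by
  constructor
  · rintro ⟨h0, h1, h2, h3⟩
    refine ⟨by omega, by omega, ?_, ?_⟩
    · show w.mk2 (n - k - 1) = Mark.arrow
      have h3' : w.mk2 (n - 1 - k) = Mark.arrow := h3
      rw [show n - k - 1 = n - 1 - k from by omega]
      exact h3'
    · show w.mk1 (n - k) = Mark.arrow
      have h2' : w.mk1 (n - 1 - (k - 1)) = Mark.arrow := h2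
      rw [show n - k = n - 1 - (k - 1) from by omega]
      exact h2'
  · rintro ⟨h0, h1, h2, h3⟩
    refine ⟨by omega, by omega, ?_, ?_⟩
    · show w.mk1 (n - 1 - (k - 1)) = Mark.arrow
      rw [show n - 1 - (k - 1) = n - k from by omega]
      exact h3
    · show w.mk2 (n - 1 - k) = Mark.arrow
      rw [show n - 1 - k = n - k - 1 from by omega]
      exact h2

lemma reverse_mopen {n : ℕ} {w : H.Walk n} {Z : Set V'} (hopen : w.MOpen Z) :
    w.reverse.MOpen Z := by
  refine ⟨?_, ?_, ?_⟩
  · intro k hk hnc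
    show w.vert (n - k) ∉ Z
    exact hopen.1 (n - k) (by omega) (fun hc => hnc ((reverse_isCollider_iff w k).mpr hc))
  · intro k hc
    show H.AncS (w.vert (n - k)) Z
    exact hopen.2.1 (n - k) ((reverse_isCollider_iff w k).mp hc)
  · intro k hk0 hkn
    have h := hopen.2.2 (n - k) (by omega) (by omega)
    constructor
    · rintro ⟨h1, h2, h3⟩
      have h1' : w.mk1 (n - k) = Mark.arrow := by
        rw [show n - k = n - 1 - (k - 1) from by omega]; exact h1
      have h2' : w.mk2 (n - k - 1) = Mark.tail := by
        rw [show n - k - 1 = n - 1 - k from by omega]; exact h2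
      have h3' : w.mk1 (n - k - 1) = Mark.tail := by
        rw [show n - k - 1 = n - 1 - k from by omega]; exact h3
      exact h.2 ⟨h3', h2', h1'⟩
    · rintro ⟨h1, h2, h3⟩
      have h1' : w.mk2 (n - k) = Mark.tail := by
        rw [show n - k = n - 1 - (k - 1) from by omega]; exact h1
      have h2' : w.mk1 (n - k) = Mark.tail := by
        rw [show n - k = n - 1 - (k - 1) from by omega]; exact h2
      have h3' : w.mk2 (n - k - 1) = Mark.arrow := by
        rw [show n - k - 1 = n - 1 - k from by omega]; exact h3
      exact h.1 ⟨h3', h2', h1'⟩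

lemma disc_of_eq {m : ℕ} (u v : H.Walk m)
    (hv : ∀ k, k ≤ m → u.vert k = v.vert k)
    (h1 : ∀ k, k < m → u.mk1 k = v.mk1 k)
    (h2 : ∀ k, k < m → u.mk2 k = v.mk2 k)
    (hd : u.IsDiscriminating) : v.IsDiscriminating := by
  obtain ⟨h3, hp, hna, hcol⟩ := hd
  refine ⟨h3, ?_, ?_, ?_⟩
  · intro a b ha hb hv'
    exact hp a b ha hb (by rw [hv a ha, hv b hb]; exact hv')
  · rw [← hv 0 (Nat.zero_le m), ← hv m le_rfl]
    exact hna
  · intro k hk0 hk1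
    obtain ⟨⟨c0, c1, c2, c3⟩, hdk⟩ := hcol k hk0 hk1
    refine ⟨⟨c0, c1, ?_, ?_⟩, ?_⟩
    · rw [← h2 (k - 1) (by omega)]; exact c2
    · rw [← h1 k (by omega)]; exact c3
    · rw [← hv k (by omega), ← hv m le_rfl]; exact hdk

lemma disc_congr {m₁ m₂ : ℕ} (h : m₁ = m₂) (u : H.Walk m₁) (v : H.Walk m₂)
    (hv : ∀ k, k ≤ m₁ → u.vert k = v.vert k)
    (h1 : ∀ k, k < m₁ → u.mk1 k = v.mk1 k)
    (h2 : ∀ k, k < m₁ → u.mk2 k = v.mk2 k) :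
    u.IsDiscriminating ↔ v.IsDiscriminating := by
  subst h
  constructor
  · exact disc_of_eq u v hv h1 h2
  · exact disc_of_eq v u (fun k hk => (hv k hk).symm) (fun k hk => (h1 k hk).symm)
      (fun k hk => (h2 k hk).symm)

end MixedGraph

end Auxiliary3


/-- Let `w` be a shortest m-open path given `Z` between `vert 0` and `vert n` in a
σ-MAG `H`, and let `vert j` be a covered node on `w`. Then: (1) if
`vert (j-1) → vert (j+1)`, there is a unique `i < j` such that the subpath of `w`
between `vert i` and `vert (j+1)` is a discriminating path for `vert j`; (2) if
`vert (j-1) ← vert (j+1)`, there is a unique `i > j` such that the subpath of `w`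
between `vert (j-1)` and `vert i` (traversed from `vert i`) is a discriminating path
for `vert j`. -/
theorem covered_node_unique_discriminating_subpath {V : Type*} (H : MixedGraph V)
    (hH : H.IsSigmaMAG) (Z : Set V) (n : ℕ) (w : H.Walk n) (hpath : w.IsPath)
    (hopen : w.MOpen Z)
    (hmin : ∀ (m : ℕ) (w' : H.Walk m), w'.IsPath → w'.vert 0 = w.vert 0 →
      w'.vert m = w.vert n → w'.MOpen Z → n ≤ m)
    (j : ℕ) (hj0 : 0 < j) (hjn : j < n)
    (hcov : H.Adj (w.vert (j - 1)) (w.vert (j + 1))) :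
    (H.dir (w.vert (j - 1)) (w.vert (j + 1)) →
      ∃! i, ∃ _ : i < j, (w.shift i (j + 1 - i) (by omega)).IsDiscriminating) ∧
    (H.dir (w.vert (j + 1)) (w.vert (j - 1)) →
      ∃! i, ∃ _ : j < i ∧ i ≤ n,
        ((w.shift (j - 1) (i - (j - 1)) (by omega)).reverse).IsDiscriminating) := by
  constructor
  · intro hd
    exact MixedGraph.main_part1 hH w hpath hopen hmin j hj0 hjn hd
  · intro hd
    have hrpath : w.reverse.IsPath := MixedGraph.reverse_isPath hpath
    have hropen : w.reverse.MOpen Z := MixedGraph.reverse_mopen hopen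
    have hrmin : ∀ (m : ℕ) (w' : H.Walk m), w'.IsPath → w'.vert 0 = w.reverse.vert 0 →
        w'.vert m = w.reverse.vert n → w'.MOpen Z → n ≤ m := by
      intro m w' hp' h0' hm' ho'
      refine hmin m w'.reverse (MixedGraph.reverse_isPath hp') ?_ ?_
        (MixedGraph.reverse_mopen ho')
      · show w'.vert (m - 0) = w.vert 0
        rw [Nat.sub_zero, hm']
        show w.vert (n - n) = w.vert 0
        rw [Nat.sub_self]
      · show w'.vert (m - m) = w.vert n
        rw [Nat.sub_self, h0']
        show w.vert (n - 0) = w.vert n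
        rw [Nat.sub_zero]
    have hdr : H.dir (w.reverse.vert (n - j - 1)) (w.reverse.vert (n - j + 1)) := by
      show H.dir (w.vert (n - (n - j - 1))) (w.vert (n - (n - j + 1)))
      rw [show n - (n - j - 1) = j + 1 from by omega, show n - (n - j + 1) = j - 1 from by omega]
      exact hd
    obtain ⟨ih, ⟨ihlt, ihd⟩, huniq⟩ := MixedGraph.main_part1 hH w.reverse hrpath hropen hrmin
      (n - j) (by omega) (by omega) hdr
    have bridge : ∀ (i ib : ℕ) (_hibi : ib = n - i) (_hji : j < i) (_hin : i ≤ n),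
        (((w.shift (j - 1) (i - (j - 1)) (by omega)).reverse).IsDiscriminating ↔
          (w.reverse.shift ib (n - j + 1 - ib) (by omega)).IsDiscriminating) := by
      intro i ib hibi hji hin
      subst hibi
      refine MixedGraph.disc_congr (by omega) _ _ ?_ ?_ ?_
      · intro k hk
        show w.vert ((j - 1) + ((i - (j - 1)) - k)) = w.vert (n - ((n - i) + k))
        exact congrArg w.vert (by omega)
      · intro k hk
        show w.mk2 ((j - 1) + ((i - (j - 1)) - 1 - k)) = w.mk2 (n - 1 - ((n - i) + k))
        exact congrArg w.mk2 (by omega)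
      · intro k hk
        show w.mk1 ((j - 1) + ((i - (j - 1)) - 1 - k)) = w.mk1 (n - 1 - ((n - i) + k))
        exact congrArg w.mk1 (by omega)
    refine ⟨n - ih, ⟨⟨by omega, by omega⟩, ?_⟩, ?_⟩
    · exact (bridge (n - ih) ih (by omega) (by omega) (by omega)).mpr ihd
    · rintro y ⟨⟨hy1, hy2⟩, hyd⟩
      have := huniq (n - y) ⟨by omega, (bridge y (n - y) rfl hy1 hy2).mp hyd⟩
      omega
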